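/- Let q, j be integers with 1 ≤ j ≤ q, let δ > δ* = (q+1−j)/j be real, and let r₊ be the unique positive real root of P (so r₊ > 1). Then Q has exactly j complex roots, counted with multiplicity, in the open disk {z ∈ ℂ : |z| < r₊}; consequently P has exactly j − 1 complex roots, counted with multiplicity, in that disk. -/

import Mathlib

open Polynomial Complex Metric

-- Lemma A: log derivative of a product
lemma logDeriv_multiset (s : Multiset ℂ) (z : ℂ) (hz : ∀ a ∈ s, z ≠ a) :
    eval z (derivative ((s.map (fun a => X - C a)).prod)) /
      eval z ((s.map (fun a => X - C a)).prod) = (s.map fun a => (z - a)⁻¹).sum := by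
  induction s using Multiset.induction_on with
  | empty => simp
  | cons a t ih =>
      have hza : z - a ≠ 0 := sub_ne_zero.2 (hz a (Multiset.mem_cons_self a t))
      have hzt : ∀ b ∈ t, z ≠ b := fun b hb => hz b (Multiset.mem_cons_of_mem hb)
      have hT : eval z ((t.map (fun a => X - C a)).prod) ≠ 0 := by
        rw [eval_multiset_prod]
        refine Multiset.prod_ne_zero ?_
        simp only [Multiset.mem_map]
        rintro ⟨p, ⟨b, hb, rfl⟩, h0⟩
        exact sub_ne_zero.2 (hzt b hb) (by simpa using h0)
      rw [Multiset.map_cons, Multiset.prod_cons, derivative_mul, Multiset.map_cons,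
        Multiset.sum_cons, ← ih hzt]
      simp only [derivative_sub, derivative_X, derivative_C, sub_zero, one_mul,
        eval_add, eval_mul, eval_sub, eval_X, eval_C]
      field_simp

lemma circleInt_inv_inside {a : ℂ} {r : ℝ} (h : ‖a‖ < r) :
    (∮ z in C((0:ℂ), r), (z - a)⁻¹) = 2 * Real.pi * I :=
  circleIntegral.integral_sub_inv_of_mem_ball (by simpa [Complex.dist_eq] using h)

lemma circleInt_inv_outside {a : ℂ} {r : ℝ} (hr : 0 ≤ r) (h : r < ‖a‖) :
    (∮ z in C((0:ℂ), r), (z - a)⁻¹) = 0 := by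
  refine Complex.circleIntegral_eq_zero_of_differentiable_on_off_countable hr
    Set.countable_empty ?_ ?_
  · refine ContinuousOn.inv₀ (by fun_prop) ?_
    intro z hz
    have : ‖z‖ ≤ r := by simpa [Complex.dist_eq] using hz
    exact sub_ne_zero.2 (fun e => absurd (e ▸ this) (not_le.2 h))
  · intro z hz
    have : ‖z‖ < r := by simpa [Complex.dist_eq] using hz.1
    have hza : z - a ≠ 0 := sub_ne_zero.2 (fun e => absurd (e ▸ this) (not_lt.2 h.le))
    exact ((differentiableAt_id.sub (differentiableAt_const a)).inv hza)

lemma circleIntegral_add' {f g : ℂ → ℂ} {r : ℝ} (hf : CircleIntegrable f 0 r)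
    (hg : CircleIntegrable g 0 r) :
    (∮ z in C((0:ℂ), r), (f z + g z)) = (∮ z in C((0:ℂ), r), f z) + ∮ z in C((0:ℂ), r), g z := by
  simp only [circleIntegral, smul_add]
  exact intervalIntegral.integral_add hf.out hg.out

lemma circleIntegrable_inv_sub {a : ℂ} {r : ℝ} (hr : 0 < r) (ha : ‖a‖ ≠ r) :
    CircleIntegrable (fun z => (z - a)⁻¹) 0 r := by
  rw [circleIntegrable_sub_inv_iff]
  right
  simpa [Complex.dist_eq, abs_of_pos hr] using ha

lemma circleIntegrable_msum {t : Multiset ℂ} {r : ℝ} (hr : 0 < r)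
    (ht : ∀ b ∈ t, ‖b‖ ≠ r) :
    CircleIntegrable (fun z => (t.map fun b => (z - b)⁻¹).sum) 0 r := by
  induction t using Multiset.induction_on with
  | empty => simpa using circleIntegrable_const (0 : ℂ) (0 : ℂ) r
  | cons a t ih =>
      simp only [Multiset.map_cons, Multiset.sum_cons]
      exact (circleIntegrable_inv_sub hr (ht a (Multiset.mem_cons_self a t))).add
        (ih fun b hb => ht b (Multiset.mem_cons_of_mem hb))

open scoped Classical in
lemma circleInt_multiset_sum (s : Multiset ℂ) (r : ℝ) (hr : 0 < r)
    (hs : ∀ a ∈ s, ‖a‖ ≠ r) :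
    (∮ z in C((0:ℂ), r), (s.map fun a => (z - a)⁻¹).sum)
      = 2 * Real.pi * I * (Multiset.card (s.filter fun a => ‖a‖ < r)) := by
  induction s using Multiset.induction_on with
  | empty => simp [circleIntegral]
  | cons a t ih =>
      have ha : ‖a‖ ≠ r := hs a (Multiset.mem_cons_self a t)
      have ht : ∀ b ∈ t, ‖b‖ ≠ r := fun b hb => hs b (Multiset.mem_cons_of_mem hb)
      simp only [Multiset.map_cons, Multiset.sum_cons]
      rw [circleIntegral_add' (circleIntegrable_inv_sub hr ha) (circleIntegrable_msum hr ht),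
        ih ht]
      rcases lt_or_gt_of_ne ha with h | h
      · rw [circleInt_inv_inside h, Multiset.filter_cons]
        simp only [h, if_pos]
        push_cast
        simp
        ring
      · rw [circleInt_inv_outside hr.le h, Multiset.filter_cons]
        simp only [not_lt.2 h.le, if_false]
        push_cast
        simp

lemma circleInt_logDeriv_congr (p f : ℂ[X]) (r : ℝ) (hr : 0 < r)
    (hne : ∀ z ∈ sphere (0:ℂ) r, eval z f ≠ 0)
    (hlt : ∀ z ∈ sphere (0:ℂ) r, ‖eval z p - eval z f‖ < ‖eval z f‖) :
    (∮ z in C((0:ℂ), r), eval z (derivative p) / eval z p)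
      = ∮ z in C((0:ℂ), r), eval z (derivative f) / eval z f := by
  have hpne : ∀ z ∈ sphere (0:ℂ) r, eval z p ≠ 0 := by
    intro z hz h0
    have := hlt z hz
    rw [h0, zero_sub, norm_neg] at this
    exact lt_irrefl _ this
  have hslit : ∀ z ∈ sphere (0:ℂ) r, eval z p / eval z f ∈ slitPlane := by
    intro z hz
    have hf := hne z hz
    have h1 : ‖eval z p / eval z f - 1‖ < 1 := by
      rw [div_sub_one hf, norm_div]
      rw [div_lt_one (norm_pos_iff.2 hf)]
      exact hlt z hz
    left
    have h2 : |(eval z p / eval z f - 1).re| ≤ ‖eval z p / eval z f - 1‖ :=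
      Complex.abs_re_le_norm _
    have h3 : (eval z p / eval z f - 1).re = (eval z p / eval z f).re - 1 := by simp
    rw [h3] at h2
    have := abs_le.1 h2
    linarith [this.1]
  set γ : ℝ → ℂ := circleMap 0 r with hγdef
  have hmem : ∀ θ : ℝ, γ θ ∈ sphere (0:ℂ) r := fun θ => circleMap_mem_sphere 0 hr.le θ
  set D : ℝ → ℂ := fun θ => (γ θ * I) *
      (eval (γ θ) (derivative p) / eval (γ θ) p - eval (γ θ) (derivative f) / eval (γ θ) f)
    with hDdef
  have key : ∀ θ : ℝ, HasDerivAt (fun θ => Complex.log (eval (γ θ) p / eval (γ θ) f)) (D θ) θ := by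
    intro θ
    have hγ : HasDerivAt γ (γ θ * I) θ := hasDerivAt_circleMap 0 r θ
    have hp : HasDerivAt (fun θ => eval (γ θ) p) (eval (γ θ) (derivative p) * (γ θ * I)) θ :=
      (p.hasDerivAt (γ θ)).comp θ hγ
    have hf : HasDerivAt (fun θ => eval (γ θ) f) (eval (γ θ) (derivative f) * (γ θ * I)) θ :=
      (f.hasDerivAt (γ θ)).comp θ hγ
    have hw := hp.div hf (hne (γ θ) (hmem θ))
    have hlog := (Complex.hasDerivAt_log (hslit (γ θ) (hmem θ))).comp θ hw
    refine hlog.congr_deriv (Eq.symm ?_)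
    have h1 : eval (γ θ) p ≠ 0 := hpne (γ θ) (hmem θ)
    have h2 : eval (γ θ) f ≠ 0 := hne (γ θ) (hmem θ)
    have e1 : eval (γ θ) p * eval (γ θ) f ≠ 0 := mul_ne_zero h1 h2
    have e2 : eval (γ θ) p * eval (γ θ) f ^ 2 ≠ 0 := mul_ne_zero h1 (pow_ne_zero 2 h2)
    show γ θ * I * (eval (γ θ) (derivative p) / eval (γ θ) p
        - eval (γ θ) (derivative f) / eval (γ θ) f) = _
    rw [inv_div, div_mul_div_comm, div_sub_div _ _ h1 h2, ← mul_div_assoc,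
      div_eq_div_iff e1 e2]
    ring
  have hγ2π : γ (2 * Real.pi) = γ 0 := by
    have := periodic_circleMap 0 r
    simpa using (this 0)
  have hcont : Continuous D := by
    have hγc : Continuous γ := continuous_circleMap 0 r
    have c1 : Continuous fun θ => eval (γ θ) (derivative p) := (Polynomial.continuous _).comp hγc
    have c2 : Continuous fun θ => eval (γ θ) p := (Polynomial.continuous _).comp hγc
    have c3 : Continuous fun θ => eval (γ θ) (derivative f) := (Polynomial.continuous _).comp hγc
    have c4 : Continuous fun θ => eval (γ θ) f := (Polynomial.continuous _).comp hγc
    exact ((hγc.mul continuous_const).mul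
      ((c1.div c2 (fun θ => hpne _ (hmem θ))).sub (c3.div c4 (fun θ => hne _ (hmem θ)))))
  have hzero : (∫ θ in (0:ℝ)..(2 * Real.pi), D θ) = 0 := by
    rw [intervalIntegral.integral_eq_sub_of_hasDerivAt (fun x _ => key x)
      (hcont.intervalIntegrable 0 (2 * Real.pi))]
    rw [hγ2π]
    simp
  have hint1 : CircleIntegrable (fun z => eval z (derivative p) / eval z p) 0 r := by
    refine ContinuousOn.circleIntegrable hr.le ?_
    exact ContinuousOn.div (Polynomial.continuous _).continuousOn
      (Polynomial.continuous _).continuousOn hpne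
  have hint2 : CircleIntegrable (fun z => eval z (derivative f) / eval z f) 0 r := by
    refine ContinuousOn.circleIntegrable hr.le ?_
    exact ContinuousOn.div (Polynomial.continuous _).continuousOn
      (Polynomial.continuous _).continuousOn hne
  have hsub := circleIntegral.integral_sub hint1 hint2
  have : (∮ z in C((0:ℂ), r), (eval z (derivative p) / eval z p
      - eval z (derivative f) / eval z f)) = 0 := by
    rw [show (∮ z in C((0:ℂ), r), (eval z (derivative p) / eval z p
        - eval z (derivative f) / eval z f))
      = ∫ θ in (0:ℝ)..(2 * Real.pi), D θ from ?_, hzero]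
    simp only [circleIntegral, deriv_circleMap, smul_eq_mul, hDdef, hγdef]
  rw [hsub] at this
  exact sub_eq_zero.mp this

lemma real_facts (q j : ℕ) (hj : 1 ≤ j) (hjq : j ≤ q) (δ : ℝ)
    (hδs : ((q : ℝ) + 1 - j) / j < δ) (rp : ℝ) (hrp : 0 < rp)
    (huniq : ∀ y : ℝ, 0 < y →
      (∑ k ∈ Finset.Icc j q, y ^ k) - δ * ∑ k ∈ Finset.range j, y ^ k = 0 → y = rp) :
    1 < rp ∧ ∀ x : ℝ, 1 < x → x < rp → x ^ (q + 1) + δ < (1 + δ) * x ^ j := by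
  set P : ℝ → ℝ := fun x => (∑ k ∈ Finset.Icc j q, x ^ k) - δ * ∑ k ∈ Finset.range j, x ^ k
    with hP
  have hj0 : (0:ℝ) < j := by positivity
  have hδj : (q : ℝ) + 1 - j < δ * j := by
    have := (div_lt_iff₀ hj0).1 hδs
    linarith
  have hδpos : 0 < δ := by
    have h1 : (1:ℝ) ≤ (q:ℝ) + 1 - j := by
      have : (j:ℝ) ≤ q := by exact_mod_cast hjq
      linarith
    nlinarith
  have contP : Continuous P := by
    apply Continuous.sub
    · exact continuous_finset_sum _ fun k _ => continuous_pow k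
    · exact continuous_const.mul (continuous_finset_sum _ fun k _ => continuous_pow k)
  have P0 : P 0 = -δ := by
    have h1 : (∑ k ∈ Finset.Icc j q, (0:ℝ) ^ k) = 0 := by
      apply Finset.sum_eq_zero
      intro k hk
      rw [Finset.mem_Icc] at hk
      exact zero_pow (by omega)
    have h2 : (∑ k ∈ Finset.range j, (0:ℝ) ^ k) = 1 := by
      rw [Finset.sum_eq_single 0]
      · norm_num
      · intro k _ hk; exact zero_pow hk
      · intro h; exact absurd (Finset.mem_range.2 (by omega)) h
    simp [hP, h1, h2]
  have Pneg : ∀ x : ℝ, 0 ≤ x → x < rp → P x < 0 := by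
    intro x hx hxrp
    by_contra hge
    push_neg at hge
    have : (0:ℝ) ∈ Set.Icc (P 0) (P x) := by
      constructor
      · rw [P0]; linarith
      · exact hge
    obtain ⟨y, hy, hPy⟩ := intermediate_value_Icc hx contP.continuousOn this
    have hy0 : y ≠ 0 := by
      intro h
      rw [h, P0] at hPy
      linarith
    have := huniq y (lt_of_le_of_ne hy.1 (Ne.symm hy0)) hPy
    rw [this] at hy
    linarith [hy.2]
  have P1 : P 1 < 0 := by
    have h1 : (∑ k ∈ Finset.Icc j q, (1:ℝ) ^ k) = (q + 1 - j : ℕ) := by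
      simp [Nat.card_Icc]
    have h2 : (∑ k ∈ Finset.range j, (1:ℝ) ^ k) = j := by simp
    have h3 : ((q + 1 - j : ℕ) : ℝ) = (q:ℝ) + 1 - j := by
      push_cast [Nat.cast_sub (by omega : j ≤ q + 1)]
      ring
    rw [hP]
    simp only []
    rw [h1, h2, h3]
    linarith
  have hrp1 : 1 < rp := by
    by_contra hle
    push_neg at hle
    set T : ℝ := max 2 (δ * j + 1) with hT
    have hT2 : (2:ℝ) ≤ T := le_max_left _ _
    have hT1 : (1:ℝ) ≤ T := by linarith
    have hTδj : δ * j < T := by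
      have := le_max_right 2 (δ * j + 1)
      linarith
    have hPT : 0 < P T := by
      have hlow : T ^ q ≤ ∑ k ∈ Finset.Icc j q, T ^ k := by
        apply Finset.single_le_sum (f := fun k => T ^ k)
        · intro k _; positivity
        · rw [Finset.mem_Icc]; omega
      have hup : (∑ k ∈ Finset.range j, T ^ k) ≤ j * T ^ (j - 1) := by
        calc (∑ k ∈ Finset.range j, T ^ k) ≤ ∑ _k ∈ Finset.range j, T ^ (j - 1) := by
              apply Finset.sum_le_sum
              intro k hk
              exact pow_le_pow_right₀ hT1 (by rw [Finset.mem_range] at hk; omega)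
          _ = j * T ^ (j - 1) := by
              rw [Finset.sum_const, Finset.card_range, nsmul_eq_mul]
      have hq : T ^ q = T ^ (j - 1) * T ^ (q - j + 1) := by
        rw [← pow_add]
        congr 1
        omega
      have hTpow : T ≤ T ^ (q - j + 1) := le_self_pow₀ hT1 (by omega)
      have hTj1 : (0:ℝ) < T ^ (j - 1) := by positivity
      have : δ * (j * T ^ (j - 1)) < T ^ q := by
        rw [hq]
        calc δ * (j * T ^ (j - 1)) = T ^ (j - 1) * (δ * j) := by ring
          _ < T ^ (j - 1) * T := by exact mul_lt_mul_of_pos_left hTδj hTj1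
          _ ≤ T ^ (j - 1) * T ^ (q - j + 1) := by
              exact mul_le_mul_of_nonneg_left hTpow (le_of_lt hTj1)
      have hmul : δ * (∑ k ∈ Finset.range j, T ^ k) ≤ δ * (j * T ^ (j - 1)) :=
        mul_le_mul_of_nonneg_left hup (le_of_lt hδpos)
      rw [hP]
      simp only []
      linarith
    obtain ⟨y, hy, hPy⟩ := intermediate_value_Icc hT1 contP.continuousOn
      ⟨le_of_lt P1, le_of_lt hPT⟩
    have hy1 : y ≠ 1 := by
      intro h
      rw [h] at hPy
      linarith
    have := huniq y (by linarith [hy.1]) hPy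
    have : 1 < rp := by
      rw [← this]
      exact lt_of_le_of_ne hy.1 (Ne.symm hy1)
    linarith
  refine ⟨hrp1, ?_⟩
  intro x hx1 hxrp
  have hPx : P x < 0 := Pneg x (by linarith) hxrp
  have gIcc : ∑ k ∈ Finset.Icc j q, x ^ k
      = (∑ i ∈ Finset.range (q+1), x ^ i) - ∑ i ∈ Finset.range j, x ^ i := by
    rw [Finset.range_eq_Ico, Finset.range_eq_Ico, ← Finset.Ico_add_one_right_eq_Icc]
    rw [eq_sub_iff_add_eq, add_comm]
    exact Finset.sum_Ico_consecutive _ (by omega) (by omega)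
  have g1 : (∑ i ∈ Finset.range (q+1), x ^ i) * (x - 1) = x ^ (q+1) - 1 := geom_sum_mul x (q+1)
  have g2 : (∑ i ∈ Finset.range j, x ^ i) * (x - 1) = x ^ j - 1 := geom_sum_mul x j
  have key : (x - 1) * P x = x ^ (q+1) - (1 + δ) * x ^ j + δ := by
    rw [hP]
    simp only []
    rw [gIcc]
    linear_combination g1 - (1 + δ) * g2
  nlinarith [mul_neg_of_pos_of_neg (by linarith : (0:ℝ) < x - 1) hPx]

lemma logDeriv_poly (g : ℂ[X]) (hg : g ≠ 0) (z : ℂ) (hz : eval z g ≠ 0) :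
    eval z (derivative g) / eval z g = (g.roots.map fun a => (z - a)⁻¹).sum := by
  have hsp : Splits g := IsAlgClosed.splits g
  have hprod := hsp.eq_prod_roots
  have hc : g.leadingCoeff ≠ 0 := leadingCoeff_ne_zero.2 hg
  have hzr : ∀ a ∈ g.roots, z ≠ a := by
    intro a ha h
    rw [h] at hz
    exact hz (isRoot_of_mem_roots ha)
  conv_lhs => rw [hprod, derivative_mul, derivative_C, zero_mul, zero_add, eval_mul, eval_mul,
    eval_C, mul_div_mul_left _ _ hc]
  exact logDeriv_multiset _ z hzr

lemma circleInt_count (g : ℂ[X]) (hg : g ≠ 0) (r : ℝ) (hr : 0 < r)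
    (hcirc : ∀ z ∈ sphere (0:ℂ) r, eval z g ≠ 0) :
    (∮ z in C((0:ℂ), r), eval z (derivative g) / eval z g)
      = 2 * Real.pi * I * (Multiset.card (g.roots.filter fun a => ‖a‖ < r)) := by
  have hs : ∀ a ∈ g.roots, ‖a‖ ≠ r := by
    intro a ha h
    have hmem : a ∈ sphere (0:ℂ) r := by
      simp [mem_sphere_iff_norm, h]
    exact hcirc a hmem (isRoot_of_mem_roots ha)
  rw [← circleInt_multiset_sum g.roots r hr hs]
  refine circleIntegral.integral_congr hr.le ?_
  intro z hz
  exact logDeriv_poly g hg z (hcirc z hz)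

/-- for `δ > δ* = (q+1−j)/j`, the unique positive real root `r₊`
of `P` satisfies `r₊ > 1`, `Q` has exactly `j` complex roots (with
multiplicity) in the open disk `|z| < r₊`, and `P` has exactly `j − 1` such
roots. -/
theorem stmt_8 (q j : ℕ) (hj : 1 ≤ j) (hjq : j ≤ q) (δ : ℝ)
    (hδs : ((q : ℝ) + 1 - j) / j < δ) (rp : ℝ) (hrp : 0 < rp)
    (hroot : (∑ k ∈ Finset.Icc j q, rp ^ k) - δ * ∑ k ∈ Finset.range j, rp ^ k = 0)
    (huniq : ∀ y : ℝ, 0 < y →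
      (∑ k ∈ Finset.Icc j q, y ^ k) - δ * ∑ k ∈ Finset.range j, y ^ k = 0 → y = rp) :
    1 < rp ∧
    Multiset.card ((((X : ℂ[X]) ^ (q + 1) - C ((1 : ℂ) + (δ : ℂ)) * X ^ j + C (δ : ℂ)).roots).filter
      (fun z => ‖z‖ < rp)) = j ∧
    Multiset.card ((((∑ k ∈ Finset.Icc j q, (X : ℂ[X]) ^ k)
        - C (δ : ℂ) * ∑ k ∈ Finset.range j, (X : ℂ[X]) ^ k).roots).filter
      (fun z => ‖z‖ < rp)) = j - 1 := by
  obtain ⟨hrp1, hineq⟩ := real_facts q j hj hjq δ hδs rp hrp huniq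
  have hδpos : 0 < δ := by
    have hj0 : (0:ℝ) < j := by positivity
    have h := (div_lt_iff₀ hj0).1 hδs
    have hq1 : (1:ℝ) ≤ (q:ℝ) + 1 - j := by
      have : (j:ℝ) ≤ q := by exact_mod_cast hjq
      linarith
    nlinarith
  set Qc : ℂ[X] := X ^ (q + 1) - C ((1:ℂ) + (δ:ℂ)) * X ^ j + C (δ:ℂ) with hQc
  set Pc : ℂ[X] := (∑ k ∈ Finset.Icc j q, (X:ℂ[X]) ^ k)
      - C (δ:ℂ) * ∑ k ∈ Finset.range j, (X:ℂ[X]) ^ k with hPc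
  set F : ℂ[X] := C (δ:ℂ) - C ((1:ℂ) + (δ:ℂ)) * X ^ j with hF
  have h1δ : ((1:ℂ) + (δ:ℂ)) ≠ 0 := by
    have : ((1:ℝ) + δ : ℝ) ≠ 0 := by linarith
    exact_mod_cast Complex.ofReal_ne_zero.2 this
  -- Qc is monic, hence nonzero
  have hQmonic : Qc.Monic := by
    have h1 : Qc = X ^ (q + 1) - (C ((1:ℂ) + (δ:ℂ)) * X ^ j - C (δ:ℂ)) := by
      rw [hQc]; ring
    rw [h1]
    apply monic_X_pow_sub
    refine lt_of_le_of_lt (degree_sub_le _ _) ?_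
    rw [max_lt_iff]
    constructor
    · refine lt_of_le_of_lt (degree_C_mul_X_pow_le j _) ?_
      exact_mod_cast (show j < q + 1 by omega)
    · refine lt_of_le_of_lt degree_C_le ?_
      exact_mod_cast (show 0 < q + 1 by omega)
  have hQ0 : Qc ≠ 0 := hQmonic.ne_zero
  -- factorization Qc = (X - C 1) * Pc
  have hfact : Qc = (X - C 1) * Pc := by
    have gIcc : (∑ k ∈ Finset.Icc j q, (X:ℂ[X]) ^ k)
        = (∑ i ∈ Finset.range (q+1), (X:ℂ[X]) ^ i) - ∑ i ∈ Finset.range j, (X:ℂ[X]) ^ i := by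
      rw [Finset.range_eq_Ico, Finset.range_eq_Ico, ← Finset.Ico_add_one_right_eq_Icc]
      rw [eq_sub_iff_add_eq, add_comm]
      exact Finset.sum_Ico_consecutive _ (by omega) (by omega)
    have g1 : (∑ i ∈ Finset.range (q+1), (X:ℂ[X]) ^ i) * (X - 1) = X ^ (q+1) - 1 :=
      geom_sum_mul (X:ℂ[X]) (q+1)
    have g2 : (∑ i ∈ Finset.range j, (X:ℂ[X]) ^ i) * (X - 1) = X ^ j - 1 :=
      geom_sum_mul (X:ℂ[X]) j
    rw [hQc, hPc, gIcc, map_add, map_one]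
    linear_combination (1 + C (δ:ℂ)) * g2 - g1
  -- facts about F
  have hFnd : F.natDegree = j := by
    have h1 : F = C (-(1 + (δ:ℂ))) * X ^ j + C (δ:ℂ) := by
      rw [hF, map_neg]; ring
    rw [h1, natDegree_add_C, natDegree_C_mul_X_pow _ _ (neg_ne_zero.2 h1δ)]
  have hF0 : F ≠ 0 := by
    intro h
    rw [h] at hFnd
    simp at hFnd
    omega
  have hFroots_card : Multiset.card F.roots = j := by
    rw [← hFnd]
    exact (splits_iff_card_roots.1 (IsAlgClosed.splits F))
  have hFroots_small : ∀ a ∈ F.roots, ‖a‖ < 1 := by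
    intro a ha
    have h0 : eval a F = 0 := isRoot_of_mem_roots ha
    rw [hF] at h0
    simp only [eval_sub, eval_mul, eval_C, eval_pow, eval_X] at h0
    have hpow : a ^ j = (δ:ℂ) / (1 + (δ:ℂ)) := by
      field_simp
      linear_combination -h0
    have habs : (‖a‖) ^ j = δ / (1 + δ) := by
      have := congrArg norm hpow
      rw [norm_pow, norm_div] at this
      rw [this]
      rw [show ((1:ℂ) + (δ:ℂ)) = ((1 + δ : ℝ) : ℂ) by push_cast; ring]
      rw [Complex.norm_real, Complex.norm_real, Real.norm_eq_abs, Real.norm_eq_abs]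
      rw [abs_of_pos hδpos, abs_of_pos (by linarith)]
    by_contra hge
    push_neg at hge
    have h1 : (1:ℝ) ≤ (‖a‖) ^ j := one_le_pow₀ hge
    rw [habs] at h1
    rw [le_div_iff₀ (by linarith)] at h1
    linarith
  -- choice of radius r
  classical
  set Afin : Finset ℝ := insert (1:ℝ)
      ((Qc.roots.toFinset.filter (fun a => ‖a‖ < rp)).image (fun a : ℂ => ‖a‖)) with hAfin
  have hAne : Afin.Nonempty := ⟨1, Finset.mem_insert_self _ _⟩
  set M : ℝ := Afin.max' hAne with hM
  have hM1 : (1:ℝ) ≤ M := Finset.le_max' _ _ (Finset.mem_insert_self _ _)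
  have hMrp : M < rp := by
    apply (Finset.max'_lt_iff _ hAne).2
    intro y hy
    rcases Finset.mem_insert.1 hy with h | h
    · rw [h]; exact hrp1
    · obtain ⟨a, ha, rfl⟩ := Finset.mem_image.1 h
      exact (Finset.mem_filter.1 ha).2
  set r : ℝ := (M + rp) / 2 with hr
  have hMr : M < r := by rw [hr]; linarith
  have h1r : 1 < r := lt_of_le_of_lt hM1 hMr
  have hrrp : r < rp := by rw [hr]; linarith
  have hr0 : 0 < r := by linarith
  have hroots_M : ∀ a ∈ Qc.roots, ‖a‖ < rp → ‖a‖ ≤ M := by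
    intro a ha h
    apply Finset.le_max'
    apply Finset.mem_insert_of_mem
    exact Finset.mem_image.2 ⟨a, Finset.mem_filter.2 ⟨Multiset.mem_toFinset.2 ha, h⟩, rfl⟩
  have hnone : ∀ a ∈ Qc.roots, ‖a‖ ≠ r := by
    intro a ha h
    have := hroots_M a ha (h ▸ hrrp)
    rw [h] at this
    linarith
  have hsame : Qc.roots.filter (fun a => ‖a‖ < rp)
      = Qc.roots.filter (fun a => ‖a‖ < r) := by
    apply Multiset.filter_congr
    intro a ha
    constructor
    · intro h
      exact lt_of_le_of_lt (hroots_M a ha h) hMr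
    · intro h
      exact lt_trans h hrrp
  -- evaluations on the sphere of radius r
  have hkey : r ^ (q+1) + δ < (1 + δ) * r ^ j := hineq r h1r hrrp
  have hFeval : ∀ z : ℂ, eval z F = (δ:ℂ) - (1 + (δ:ℂ)) * z ^ j := by
    intro z
    rw [hF]
    simp
  have hFlow : ∀ z ∈ sphere (0:ℂ) r, r ^ (q+1) < ‖eval z F‖ := by
    intro z hz
    have hza : ‖z‖ = r := by
      rw [mem_sphere_iff_norm, sub_zero] at hz
      rw [← hz]
    have h1 : ‖(1 + (δ:ℂ)) * z ^ j‖ = (1 + δ) * r ^ j := by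
      rw [norm_mul, norm_pow, hza]
      congr 1
      rw [show ((1:ℂ) + (δ:ℂ)) = ((1 + δ : ℝ) : ℂ) by push_cast; ring, Complex.norm_real, Real.norm_eq_abs,
        abs_of_pos (by linarith)]
    have h2 : ‖(δ:ℂ)‖ = δ := by
      rw [Complex.norm_real, Real.norm_eq_abs, abs_of_pos hδpos]
    have h3 : (1 + δ) * r ^ j - δ ≤ ‖eval z F‖ := by
      rw [hFeval]
      calc (1 + δ) * r ^ j - δ
          = ‖(1 + (δ:ℂ)) * z ^ j‖ - ‖(δ:ℂ)‖ := by rw [h1, h2]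
        _ ≤ ‖(1 + (δ:ℂ)) * z ^ j - (δ:ℂ)‖ := by
            exact norm_sub_norm_le _ _
        _ = ‖(δ:ℂ) - (1 + (δ:ℂ)) * z ^ j‖ := by
            rw [← norm_neg]
            congr 1
            ring
    linarith
  have hFne : ∀ z ∈ sphere (0:ℂ) r, eval z F ≠ 0 := by
    intro z hz h0
    have := hFlow z hz
    rw [h0] at this
    simp at this
    nlinarith [pow_pos hr0 (q+1)]
  have hQFne : ∀ z ∈ sphere (0:ℂ) r,
      ‖eval z Qc - eval z F‖ < ‖eval z F‖ := by
    intro z hz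
    have hza : ‖z‖ = r := by
      rw [mem_sphere_iff_norm, sub_zero] at hz
      rw [← hz]
    have hdiff : eval z Qc - eval z F = z ^ (q+1) := by
      rw [hFeval, hQc]
      simp only [eval_add, eval_sub, eval_mul, eval_pow, eval_X, eval_C]
      ring
    rw [hdiff, norm_pow, hza]
    exact lt_of_le_of_lt (by nlinarith [pow_pos hr0 (q+1)]) (hFlow z hz)
  have hQne : ∀ z ∈ sphere (0:ℂ) r, eval z Qc ≠ 0 := by
    intro z hz h0
    have hza : ‖z‖ = r := by
      rw [mem_sphere_iff_norm, sub_zero] at hz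
      rw [← hz]
    have : z ∈ Qc.roots := by
      rw [mem_roots hQ0]
      exact h0
    exact hnone z this hza
  -- the two circle integrals
  have hint1 := circleInt_count Qc hQ0 r hr0 hQne
  have hint2 := circleInt_count F hF0 r hr0 hFne
  have hRouche := circleInt_logDeriv_congr Qc F r hr0 hFne hQFne
  have hFfilter : (F.roots.filter fun a => ‖a‖ < r) = F.roots := by
    apply Multiset.filter_eq_self.2
    intro a ha
    exact lt_trans (hFroots_small a ha) h1r
  rw [hint1, hint2, hFfilter, hFroots_card] at hRouche
  have h2pi : (2 * (Real.pi : ℂ) * I) ≠ 0 := by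
    simp [Real.pi_ne_zero, I_ne_zero, Complex.ofReal_ne_zero]
  have hcount : Multiset.card (Qc.roots.filter fun a => ‖a‖ < r) = j := by
    have := mul_left_cancel₀ h2pi hRouche
    exact_mod_cast this
  have hcountQ : Multiset.card (Qc.roots.filter fun z => ‖z‖ < rp) = j := by
    rw [hsame]
    exact hcount
  -- part 3 : count for Pc
  have hPc0 : Pc ≠ 0 := by
    intro h
    rw [h, mul_zero] at hfact
    exact hQ0 hfact
  have hX1 : ((X : ℂ[X]) - C 1) ≠ 0 := X_sub_C_ne_zero 1
  have hprod0 : ((X : ℂ[X]) - C 1) * Pc ≠ 0 := mul_ne_zero hX1 hPc0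
  have hrootsQ : Qc.roots = ((X : ℂ[X]) - C 1).roots + Pc.roots := by
    rw [hfact]
    exact roots_mul hprod0
  have hfilterQ : Multiset.card (Qc.roots.filter fun z => ‖z‖ < rp)
      = Multiset.card ((((X : ℂ[X]) - C 1).roots).filter fun z => ‖z‖ < rp)
        + Multiset.card ((Pc.roots).filter fun z => ‖z‖ < rp) := by
    rw [hrootsQ, Multiset.filter_add, Multiset.card_add]
  have hone : Multiset.card ((((X : ℂ[X]) - C 1).roots).filter
      fun z => ‖z‖ < rp) = 1 := by
    rw [roots_X_sub_C]
    rw [Multiset.filter_singleton]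
    rw [if_pos]
    · simp
    · simpa using hrp1
  refine ⟨hrp1, hcountQ, ?_⟩
  rw [hcountQ, hone] at hfilterQ
  omega
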